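/- Let V be a Jordan algebra over K and assume that for every x ∈ V, if L_x is a derivation of V then L_x = 0. Then {L_x : x ∈ V} ∩ Der(V) = {0}, and the map sending L_a + D (with a ∈ V, D ∈ Der(V)) to the pair (L_a + D, −L_a + D) is a well-defined injective Lie algebra homomorphism from the structure algebra str(V) into Der(V,V). -/

import Mathlib

variable {K V : Type*} [Field K] [AddCommGroup V] [Module K V]

/-- The Jordan triple product `{x,y,z} = 2((xy)z + x(yz) - y(xz))`. -/
def triple (m : V →ₗ[K] V →ₗ[K] V) (x y z : V) : V :=
  2 • (m (m x y) z + m x (m y z) - m y (m x z))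

/-- The operator `D_{x,y} = 2 L_{xy} + 2[L_x, L_y]`, satisfying `D_{x,y} z = {x,y,z}`. -/
def Dop (m : V →ₗ[K] V →ₗ[K] V) (x y : V) : Module.End K V :=
  2 • (m (m x y) : Module.End K V) + 2 • ⁅(m x : Module.End K V), (m y : Module.End K V)⁆

/-- A derivation of the (Jordan) algebra `(V, m)`. -/
def IsDeriv (m : V →ₗ[K] V →ₗ[K] V) (D : Module.End K V) : Prop :=
  ∀ x y, D (m x y) = m (D x) y + m x (D y)

/-- A pair derivation `(D⁺, D⁻)` of the Jordan algebra `(V, m)`. -/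
def IsPairDer (m : V →ₗ[K] V →ₗ[K] V) (Dp Dm : Module.End K V) : Prop :=
  ∀ x y z,
    Dp (triple m x y z)
      = triple m (Dp x) y z + triple m x (Dm y) z + triple m x y (Dp z) ∧
    Dm (triple m x y z)
      = triple m (Dm x) y z + triple m x (Dp y) z + triple m x y (Dm z)

section aux
variable {m : V →ₗ[K] V →ₗ[K] V}

/-- Elementwise form of the Jordan identity. -/
lemma hJe (hJordan : ∀ x y z : V,
      ⁅(m x : Module.End K V), m (m y z)⁆ + ⁅(m y : Module.End K V), m (m z x)⁆
        + ⁅(m z : Module.End K V), m (m x y)⁆ = 0)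
    (x y z w : V) : m x (m (m y z) w) + m y (m (m z x) w) + m z (m (m x y) w)
      = m (m y z) (m x w) + m (m z x) (m y w) + m (m x y) (m z w) := by
  have h := LinearMap.congr_fun (hJordan x y z) w
  simp only [Ring.lie_def, LinearMap.add_apply, LinearMap.sub_apply, Module.End.mul_apply,
    LinearMap.zero_apply] at h
  linear_combination (norm := module) h

/-- `[L_a,[L_x,L_y]] = L_{(ax)y} - L_{(ay)x}`, elementwise. -/
lemma keyLem (hcomm : ∀ x y : V, m x y = m y x)
    (hJordan : ∀ x y z : V,
      ⁅(m x : Module.End K V), m (m y z)⁆ + ⁅(m y : Module.End K V), m (m z x)⁆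
        + ⁅(m z : Module.End K V), m (m x y)⁆ = 0)
    (a x y w : V) :
    m a (m x (m y w)) - m a (m y (m x w))
      = m x (m y (m a w)) - m y (m x (m a w)) + m (m (m a x) y) w - m (m (m a y) x) w := by
  have hA := hJe hJordan a y w x
  have hB := hJe hJordan a x w y
  rw [hcomm (m y w) x, hcomm w a, hcomm (m a w) x, hcomm w (m (m a y) x), hcomm y x,
    hcomm w x] at hA
  rw [hcomm (m x w) y, hcomm w a, hcomm (m a w) y, hcomm w (m (m a x) y), hcomm w y,
    hcomm (m a x) (m y w), hcomm (m x w) (m a y)] at hB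
  linear_combination (norm := module) hA - hB

/-- `[L_x, L_y]` is a derivation. -/
lemma bracket_isDeriv (hcomm : ∀ x y : V, m x y = m y x)
    (hJordan : ∀ x y z : V,
      ⁅(m x : Module.End K V), m (m y z)⁆ + ⁅(m y : Module.End K V), m (m z x)⁆
        + ⁅(m z : Module.End K V), m (m x y)⁆ = 0)
    (x y : V) : IsDeriv m ⁅(m x : Module.End K V), m y⁆ := by
  intro a w
  have hK := keyLem hcomm hJordan a x y w
  simp only [Ring.lie_def, LinearMap.sub_apply, Module.End.mul_apply, map_sub]
  rw [hcomm (m a x) y, hcomm a x, hcomm (m a y) x, hcomm a y] at hK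
  linear_combination (norm := module) -hK

/-- `L_a {x,y,z} = {ax,y,z} - {x,ay,z} + {x,y,az}`. -/
lemma la_triple (hcomm : ∀ x y : V, m x y = m y x)
    (hJordan : ∀ x y z : V,
      ⁅(m x : Module.End K V), m (m y z)⁆ + ⁅(m y : Module.End K V), m (m z x)⁆
        + ⁅(m z : Module.End K V), m (m x y)⁆ = 0)
    (a x y z : V) :
    m a (triple m x y z)
      = triple m (m a x) y z - triple m x (m a y) z + triple m x y (m a z) := by
  have hJ1 := hJe hJordan a x y z
  have hK := keyLem hcomm hJordan a x y z
  rw [hcomm y a] at hJ1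
  simp only [triple, map_nsmul, map_add, map_sub]
  rw [hcomm x (m a y)]
  linear_combination (norm := module) hJ1 + hJ1 + hK + hK

/-- A derivation is a derivation of the triple product. -/
lemma deriv_triple {D : Module.End K V} (hD : IsDeriv m D) (x y z : V) :
    D (triple m x y z)
      = triple m (D x) y z + triple m x (D y) z + triple m x y (D z) := by
  have hD' : ∀ a b : V, D (m a b) = m (D a) b + m a (D b) := hD
  simp only [triple, map_nsmul, map_add, map_sub, hD', LinearMap.add_apply, smul_add, smul_sub]
  module

lemma isDeriv_add {D E : Module.End K V} (hD : IsDeriv m D) (hE : IsDeriv m E) :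
    IsDeriv m (D + E) := by
  intro x y
  have hD' : ∀ a b : V, D (m a b) = m (D a) b + m a (D b) := hD
  have hE' : ∀ a b : V, E (m a b) = m (E a) b + m a (E b) := hE
  simp only [LinearMap.add_apply, hD', hE', map_add]
  module

lemma isDeriv_bracket {D E : Module.End K V} (hD : IsDeriv m D) (hE : IsDeriv m E) :
    IsDeriv m ⁅D, E⁆ := by
  intro x y
  have hD' : ∀ a b : V, D (m a b) = m (D a) b + m a (D b) := hD
  have hE' : ∀ a b : V, E (m a b) = m (E a) b + m a (E b) := hE
  simp only [Ring.lie_def, LinearMap.sub_apply, Module.End.mul_apply, hD', hE', map_add, map_sub]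
  module

lemma isDeriv_sub {D E : Module.End K V} (hD : IsDeriv m D) (hE : IsDeriv m E) :
    IsDeriv m (D - E) := by
  intro x y
  have hD' : ∀ a b : V, D (m a b) = m (D a) b + m a (D b) := hD
  have hE' : ∀ a b : V, E (m a b) = m (E a) b + m a (E b) := hE
  simp only [LinearMap.sub_apply, hD', hE', map_sub]
  module

/-- `[D, L_b] = L_{D b}` for a derivation `D`. -/
lemma bracket_deriv_l {D : Module.End K V} (hD : IsDeriv m D) (b : V) :
    ⁅D, (m b : Module.End K V)⁆ = m (D b) := by
  ext x
  simp only [Ring.lie_def, LinearMap.sub_apply, Module.End.mul_apply, hD b x]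
  abel

lemma triple_addl (u v y z : V) :
    triple m (u + v) y z = triple m u y z + triple m v y z := by
  simp only [triple, map_add, LinearMap.add_apply]; module

lemma triple_addm (x u v z : V) :
    triple m x (u + v) z = triple m x u z + triple m x v z := by
  simp only [triple, map_add, LinearMap.add_apply]; module

lemma triple_addr (x y u v : V) :
    triple m x y (u + v) = triple m x y u + triple m x y v := by
  simp only [triple, map_add, LinearMap.add_apply]; module

lemma triple_negl (u y z : V) : triple m (-u) y z = - triple m u y z := by
  simp only [triple, map_neg, LinearMap.neg_apply]; module

lemma triple_negm (x u z : V) : triple m x (-u) z = - triple m x u z := by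
  simp only [triple, map_neg, LinearMap.neg_apply]; module

lemma triple_negr (x y u : V) : triple m x y (-u) = - triple m x y u := by
  simp only [triple, map_neg, LinearMap.neg_apply]; module

end aux

/-- If no nonzero `L_x` is a derivation, then `{L_x} ∩ Der(V) = {0}` and
`L_a + D ↦ (L_a + D, -L_a + D)` is a well-defined injective Lie algebra homomorphism
from `str(V)` into `Der(V,V)`. -/
theorem stmt2
    (h2 : (2 : K) ≠ 0) (h3 : (3 : K) ≠ 0)
    (m : V →ₗ[K] V →ₗ[K] V)
    (hcomm : ∀ x y : V, m x y = m y x)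
    (hJordan : ∀ x y z : V,
      ⁅(m x : Module.End K V), m (m y z)⁆ + ⁅(m y : Module.End K V), m (m z x)⁆
        + ⁅(m z : Module.End K V), m (m x y)⁆ = 0)
    (hL : ∀ x : V, IsDeriv m (m x) → (m x : Module.End K V) = 0) :
    (∀ A : Module.End K V, (∃ x, A = m x) → IsDeriv m A → A = 0) ∧
    ∃ f : Module.End K V → Module.End K V × Module.End K V,
      (∀ (a : V) (D : Module.End K V), IsDeriv m D →
        f (m a + D) = (m a + D, - m a + D)) ∧
      Set.InjOn f {A : Module.End K V | ∃ a D, IsDeriv m D ∧ A = m a + D} ∧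
      (∀ (a : V) (D : Module.End K V), IsDeriv m D →
        IsPairDer m (m a + D) (- m a + D)) ∧
      (∀ A B : Module.End K V,
        A ∈ {A : Module.End K V | ∃ a D, IsDeriv m D ∧ A = m a + D} →
        B ∈ {A : Module.End K V | ∃ a D, IsDeriv m D ∧ A = m a + D} →
        f ⁅A, B⁆ = (⁅(f A).1, (f B).1⁆, ⁅(f A).2, (f B).2⁆)) := by
  classical
  -- uniqueness of the decomposition A = L_a + D
  have huniq : ∀ (a b : V) (D E : Module.End K V), IsDeriv m D → IsDeriv m E →
      (m a : Module.End K V) + D = m b + E → (m a : Module.End K V) = m b ∧ D = E := by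
    intro a b D E hD hE h
    have hsub : (m (a - b) : Module.End K V) = E - D := by
      rw [map_sub, sub_eq_sub_iff_add_eq_add]
      exact h.trans (add_comm _ _)
    have hder : IsDeriv m (m (a - b)) := by
      rw [hsub]; exact isDeriv_sub hE hD
    have h0 := hL (a - b) hder
    rw [map_sub, sub_eq_zero] at h0
    refine ⟨h0, ?_⟩
    rw [h0] at h
    exact add_left_cancel h
  refine ⟨fun A hA hdA => by obtain ⟨x, rfl⟩ := hA; exact hL x hdA, ?_⟩
  refine ⟨fun A => (A, A - 2 • (if h : ∃ a D, IsDeriv m D ∧ A = m a + D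
      then (m h.choose : Module.End K V) else 0)), ?_, ?_, ?_, ?_⟩
  case _ =>
    -- well-definedness
    intro a D hD
    have hx : ∃ a' D', IsDeriv m D' ∧ (m a : Module.End K V) + D = m a' + D' := ⟨a, D, hD, rfl⟩
    simp only
    rw [dif_pos hx]
    obtain ⟨D', hD', hEq⟩ := hx.choose_spec
    obtain ⟨hma, -⟩ := huniq hx.choose a D' D hD' hD hEq.symm
    rw [hma, Prod.mk.injEq]
    exact ⟨rfl, by abel⟩
  case _ =>
    -- injectivity
    intro A _ B _ h
    exact congrArg Prod.fst h
  case _ =>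
    -- pair derivations
    intro a D hD x y z
    constructor
    · show (m a + D) (triple m x y z)
        = triple m ((m a + D) x) y z + triple m x ((-m a + D) y) z + triple m x y ((m a + D) z)
      simp only [LinearMap.add_apply, LinearMap.neg_apply, triple_addl, triple_addm, triple_addr,
        triple_negm]
      rw [la_triple hcomm hJordan, deriv_triple hD]
      abel
    · show (-m a + D) (triple m x y z)
        = triple m ((-m a + D) x) y z + triple m x ((m a + D) y) z + triple m x y ((-m a + D) z)
      simp only [LinearMap.add_apply, LinearMap.neg_apply, triple_addl, triple_addm, triple_addr,
        triple_negl, triple_negr]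
      rw [la_triple hcomm hJordan, deriv_triple hD]
      abel
  case _ =>
    -- Lie homomorphism
    rintro A B ⟨a, D, hD, rfl⟩ ⟨b, E, hE, rfl⟩
    letI : LieRing (Module.End K V) := LieRing.ofAssociativeRing
    have hFder : IsDeriv m (⁅(m a : Module.End K V), m b⁆ + ⁅D, E⁆) :=
      isDeriv_add (bracket_isDeriv hcomm hJordan a b) (isDeriv_bracket hD hE)
    have hmaE : ⁅(m a : Module.End K V), E⁆ = -(m (E a) : Module.End K V) := by
      rw [← lie_skew, bracket_deriv_l hE a]
    have hdecomp : ⁅(m a : Module.End K V) + D, (m b : Module.End K V) + E⁆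
        = m (D b - E a) + (⁅(m a : Module.End K V), m b⁆ + ⁅D, E⁆) := by
      rw [map_sub, add_lie, lie_add, lie_add, hmaE, bracket_deriv_l hD b]
      abel
    have hdecomp2 : ⁅-(m a : Module.End K V) + D, -(m b : Module.End K V) + E⁆
        = -m (D b - E a) + (⁅(m a : Module.End K V), m b⁆ + ⁅D, E⁆) := by
      rw [map_sub, add_lie, lie_add, lie_add]
      simp only [lie_neg, neg_lie, neg_neg]
      rw [hmaE, bracket_deriv_l hD b]
      abel
    -- compute f on the three elements using the well-definedness proof
    have hwd : ∀ (c : V) (F : Module.End K V), IsDeriv m F →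
        ((fun A => ((A : Module.End K V), A - 2 • (if h : ∃ a D, IsDeriv m D ∧ A = m a + D
          then (m h.choose : Module.End K V) else 0))) (m c + F))
          = (m c + F, -m c + F) := by
      intro c F hF
      have hx : ∃ a' D', IsDeriv m D' ∧ (m c : Module.End K V) + F = m a' + D' := ⟨c, F, hF, rfl⟩
      simp only
      rw [dif_pos hx]
      obtain ⟨D', hD', hEq⟩ := hx.choose_spec
      obtain ⟨hma, -⟩ := huniq hx.choose c D' F hD' hF hEq.symm
      rw [hma, Prod.mk.injEq]
      exact ⟨rfl, by abel⟩
    rw [hdecomp, hwd _ _ hFder, hwd a D hD, hwd b E hE, Prod.mk.injEq]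
    constructor
    · rw [← hdecomp]
    · rw [← hdecomp2]
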